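/- Let ζ, θ, ω, u, v, p, q : ℝ → ℝ be differentiable with, for all t: sin(ζ t) ≠ 0, sin(θ t) ≠ 0, u′(t) = cos(ζ t)/sin(ζ t), v′(t) = cos(θ t)/(sin(ζ t)·sin(θ t)), ω′(t) = √(ζ′(t)²·sin(θ t)² + θ′(t)²), p′(t) = sin(ω t)/(sin(ζ t)·sin(θ t)), q′(t) = cos(ω t)/(sin(ζ t)·sin(θ t)). Define F : ℝ² → ℝ³ by F(t,s) = (t − s·sin(θ t)·sin(ζ t), u t − s·sin(θ t)·cos(ζ t), v t − s·cos(θ t)) and G : ℝ² → ℝ² by G(t,s) = (p t − s·sin(ω t), q t − s·cos(ω t)). Then the first fundamental forms of F and G coincide: at every (t,s), ⟨∂F/∂t, ∂F/∂t⟩ = ⟨∂G/∂t, ∂G/∂t⟩, ⟨∂F/∂t, ∂F/∂s⟩ = ⟨∂G/∂t, ∂G/∂s⟩, and ⟨∂F/∂s, ∂F/∂s⟩ = ⟨∂G/∂s, ∂G/∂s⟩ = 1 (inner products taken in ℝ³ and ℝ² respectively). Hence the tangent-developable surface parametrized by F is unfolded onto the plane by G without distortion. -/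

import Mathlib

open Real
open scoped RealInnerProductSpace

/-- Euler's parametrization of a developable (tangent) surface:
the point at distance `s` along the tangent line of the space curve
`t ↦ (t, u t, v t)`, in terms of the angles `ζ`, `θ`. -/
noncomputable def eulerF (ζ θ u v : ℝ → ℝ) (w : ℝ × ℝ) : EuclideanSpace ℝ (Fin 3) :=
  WithLp.toLp 2 ![w.1 - w.2 * sin (θ w.1) * sin (ζ w.1),
    u w.1 - w.2 * sin (θ w.1) * cos (ζ w.1),
    v w.1 - w.2 * cos (θ w.1)]

/-- Euler's parametrization of the planar figure onto which the surface is unfolded. -/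
noncomputable def eulerG (ω p q : ℝ → ℝ) (w : ℝ × ℝ) : EuclideanSpace ℝ (Fin 2) :=
  WithLp.toLp 2 ![p w.1 - w.2 * sin (ω w.1),
    q w.1 - w.2 * cos (ω w.1)]

private theorem e3_hasDerivAt (f g h : ℝ → ℝ) (f' g' h' t : ℝ)
    (hf : HasDerivAt f f' t) (hg : HasDerivAt g g' t) (hh : HasDerivAt h h' t)
    (F : ℝ → EuclideanSpace ℝ (Fin 3)) (D : EuclideanSpace ℝ (Fin 3))
    (hF : ∀ x, F x = WithLp.toLp 2 ![f x, g x, h x]) (hD : D = WithLp.toLp 2 ![f', g', h']) :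
    HasDerivAt F D t := by
  have key : HasDerivAt (fun t' => (![f t', g t', h t'] : Fin 3 → ℝ))
      (![f', g', h']) t := by
    rw [hasDerivAt_pi]
    intro i
    fin_cases i
    · exact hf
    · exact hg
    · exact hh
  have hFe : F = fun x => (EuclideanSpace.equiv (Fin 3) ℝ).symm ![f x, g x, h x] := by
    funext x; rw [hF x]; rfl
  rw [hFe, hD]
  exact ((EuclideanSpace.equiv (Fin 3) ℝ).symm.toContinuousLinearMap.hasFDerivAt.comp_hasDerivAt
    t key)

private theorem e2_hasDerivAt (f g : ℝ → ℝ) (f' g' t : ℝ)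
    (hf : HasDerivAt f f' t) (hg : HasDerivAt g g' t)
    (F : ℝ → EuclideanSpace ℝ (Fin 2)) (D : EuclideanSpace ℝ (Fin 2))
    (hF : ∀ x, F x = WithLp.toLp 2 ![f x, g x]) (hD : D = WithLp.toLp 2 ![f', g']) :
    HasDerivAt F D t := by
  have key : HasDerivAt (fun t' => (![f t', g t'] : Fin 2 → ℝ)) (![f', g']) t := by
    rw [hasDerivAt_pi]
    intro i
    fin_cases i
    · exact hf
    · exact hg
  have hFe : F = fun x => (EuclideanSpace.equiv (Fin 2) ℝ).symm ![f x, g x] := by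
    funext x; rw [hF x]; rfl
  rw [hFe, hD]
  exact ((EuclideanSpace.equiv (Fin 2) ℝ).symm.toContinuousLinearMap.hasFDerivAt.comp_hasDerivAt
    t key)

theorem euler_unfolding_first_fundamental_form
    (ζ θ ω u v p q : ℝ → ℝ)
    (hζ : Differentiable ℝ ζ) (hθ : Differentiable ℝ θ) (hω : Differentiable ℝ ω)
    (hu : Differentiable ℝ u) (hv : Differentiable ℝ v)
    (hp : Differentiable ℝ p) (hq : Differentiable ℝ q)
    (hsinζ : ∀ t, sin (ζ t) ≠ 0) (hsinθ : ∀ t, sin (θ t) ≠ 0)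
    (hu' : ∀ t, deriv u t = cos (ζ t) / sin (ζ t))
    (hv' : ∀ t, deriv v t = cos (θ t) / (sin (ζ t) * sin (θ t)))
    (hω' : ∀ t, deriv ω t = Real.sqrt ((deriv ζ t) ^ 2 * (sin (θ t)) ^ 2 + (deriv θ t) ^ 2))
    (hp' : ∀ t, deriv p t = sin (ω t) / (sin (ζ t) * sin (θ t)))
    (hq' : ∀ t, deriv q t = cos (ω t) / (sin (ζ t) * sin (θ t))) :
    ∀ t s : ℝ,
      (⟪deriv (fun t' => eulerF ζ θ u v (t', s)) t,
         deriv (fun t' => eulerF ζ θ u v (t', s)) t⟫ : ℝ) =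
        ⟪deriv (fun t' => eulerG ω p q (t', s)) t,
          deriv (fun t' => eulerG ω p q (t', s)) t⟫ ∧
      (⟪deriv (fun t' => eulerF ζ θ u v (t', s)) t,
         deriv (fun s' => eulerF ζ θ u v (t, s')) s⟫ : ℝ) =
        ⟪deriv (fun t' => eulerG ω p q (t', s)) t,
          deriv (fun s' => eulerG ω p q (t, s')) s⟫ ∧
      (⟪deriv (fun s' => eulerF ζ θ u v (t, s')) s,
         deriv (fun s' => eulerF ζ θ u v (t, s')) s⟫ : ℝ) = 1 ∧
      (⟪deriv (fun s' => eulerG ω p q (t, s')) s,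
         deriv (fun s' => eulerG ω p q (t, s')) s⟫ : ℝ) = 1 := by
  intro t s
  -- derivative of F in the t-direction
  have hFt : HasDerivAt (fun t' => eulerF ζ θ u v (t', s))
      (WithLp.toLp 2 ![1 - ((s * (cos (θ t) * deriv θ t)) * sin (ζ t)
            + (s * sin (θ t)) * (cos (ζ t) * deriv ζ t)),
         deriv u t - ((s * (cos (θ t) * deriv θ t)) * cos (ζ t)
            + (s * sin (θ t)) * (-sin (ζ t) * deriv ζ t)),
         deriv v t - s * (-sin (θ t) * deriv θ t)] : EuclideanSpace ℝ (Fin 3)) t := by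
    refine e3_hasDerivAt _ _ _ _ _ _ t ?_ ?_ ?_ _ _ (fun x => rfl) rfl
    · exact (hasDerivAt_id t).sub
        ((((hθ t).hasDerivAt.sin.const_mul s).mul (hζ t).hasDerivAt.sin))
    · exact (hu t).hasDerivAt.sub
        ((((hθ t).hasDerivAt.sin.const_mul s).mul (hζ t).hasDerivAt.cos))
    · exact (hv t).hasDerivAt.sub ((hθ t).hasDerivAt.cos.const_mul s)
  -- derivative of F in the s-direction
  have hFs : HasDerivAt (fun s' => eulerF ζ θ u v (t, s'))
      (WithLp.toLp 2 ![0 - 1 * sin (θ t) * sin (ζ t),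
         0 - 1 * sin (θ t) * cos (ζ t),
         0 - 1 * cos (θ t)] : EuclideanSpace ℝ (Fin 3)) s := by
    refine e3_hasDerivAt _ _ _ _ _ _ s ?_ ?_ ?_ _ _ (fun x => rfl) rfl
    · exact (hasDerivAt_const s t).sub
        (((hasDerivAt_id s).mul_const (sin (θ t))).mul_const (sin (ζ t)))
    · exact (hasDerivAt_const s (u t)).sub
        (((hasDerivAt_id s).mul_const (sin (θ t))).mul_const (cos (ζ t)))
    · exact (hasDerivAt_const s (v t)).sub ((hasDerivAt_id s).mul_const (cos (θ t)))
  -- derivative of G in the t-direction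
  have hGt : HasDerivAt (fun t' => eulerG ω p q (t', s))
      (WithLp.toLp 2 ![deriv p t - s * (cos (ω t) * deriv ω t),
         deriv q t - s * (-sin (ω t) * deriv ω t)] : EuclideanSpace ℝ (Fin 2)) t := by
    refine e2_hasDerivAt _ _ _ _ t ?_ ?_ _ _ (fun x => rfl) rfl
    · exact (hp t).hasDerivAt.sub ((hω t).hasDerivAt.sin.const_mul s)
    · exact (hq t).hasDerivAt.sub ((hω t).hasDerivAt.cos.const_mul s)
  -- derivative of G in the s-direction
  have hGs : HasDerivAt (fun s' => eulerG ω p q (t, s'))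
      (WithLp.toLp 2 ![0 - 1 * sin (ω t), 0 - 1 * cos (ω t)] : EuclideanSpace ℝ (Fin 2)) s := by
    refine e2_hasDerivAt _ _ _ _ s ?_ ?_ _ _ (fun x => rfl) rfl
    · exact (hasDerivAt_const s (p t)).sub ((hasDerivAt_id s).mul_const (sin (ω t)))
    · exact (hasDerivAt_const s (q t)).sub ((hasDerivAt_id s).mul_const (cos (ω t)))
  rw [hFt.deriv, hFs.deriv, hGt.deriv, hGs.deriv]
  have Ha : sin (ζ t) ^ 2 + cos (ζ t) ^ 2 = 1 := sin_sq_add_cos_sq (ζ t)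
  have Hc : sin (θ t) ^ 2 + cos (θ t) ^ 2 = 1 := sin_sq_add_cos_sq (θ t)
  have HS : sin (ω t) ^ 2 + cos (ω t) ^ 2 = 1 := sin_sq_add_cos_sq (ω t)
  have Hw : (deriv ω t) ^ 2 = (deriv ζ t) ^ 2 * sin (θ t) ^ 2 + (deriv θ t) ^ 2 := by
    rw [hω' t]
    exact Real.sq_sqrt (by positivity)
  have Hai : sin (ζ t) * (sin (ζ t))⁻¹ = 1 := mul_inv_cancel₀ (hsinζ t)
  have Hci : sin (θ t) * (sin (θ t))⁻¹ = 1 := mul_inv_cancel₀ (hsinθ t)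
  set a := sin (ζ t); set b := cos (ζ t); set c := sin (θ t); set d := cos (θ t)
  set S := sin (ω t); set C := cos (ω t)
  set y := deriv θ t; set z := deriv ζ t; set w := deriv ω t
  refine ⟨?_, ?_, ?_, ?_⟩ <;>
    simp only [PiLp.inner_apply, PiLp.toLp_apply, RCLike.inner_apply, conj_trivial, Fin.sum_univ_three,
      Fin.sum_univ_two, Matrix.cons_val_zero, Matrix.cons_val_one, Matrix.head_cons,
      Matrix.cons_val_two, Matrix.tail_cons]
  · rw [hu' t, hv' t, hp' t, hq' t]
    linear_combination
      (a⁻¹ ^ 2 - 2 * d * y * s * a⁻¹ + d ^ 2 * y ^ 2 * s ^ 2 + c ^ 2 * z ^ 2 * s ^ 2) * Ha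
      + (a⁻¹ ^ 2 * c⁻¹ ^ 2 + y ^ 2 * s ^ 2) * Hc
      + (-(a⁻¹ ^ 2 * c⁻¹ ^ 2) - w ^ 2 * s ^ 2) * HS
      + (-(s ^ 2)) * Hw
      + (-1 + 2 * b * c * z * s - a * a⁻¹ + 2 * a * d * y * s) * Hai
      + (-(a⁻¹ ^ 2) + 2 * d * y * s * a⁻¹ - c * a⁻¹ ^ 2 * c⁻¹) * Hci
  · rw [hu' t, hv' t, hp' t, hq' t]
    linear_combination
      (-(c * a⁻¹) + c * d * y * s) * Ha + (-(a⁻¹ * c⁻¹)) * Hc + (a⁻¹ * c⁻¹) * HS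
      + (a * c) * Hai + (c * a⁻¹) * Hci
  · linear_combination c ^ 2 * Ha + Hc
  · linear_combination HS
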